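/- arXiv:1610.03926 — 3 statements merged into one kernel-verified Lean document; each statement's English description precedes it below -/
import Mathlib

section
/- Let φ, ρ : [0,R] → ℝ be continuous nonnegative functions with φ(0) = 0 and φ differentiable, and suppose φ satisfies the Riccati-type differential inequality φ' + φ²/(n-1) ≤ ρ on [0,R] for some integer n ≥ 2. Then for every p > n/2 and every r ∈ [0,R], ∫₀ʳ φ^{2p} dt ≤ ((n-1)(2p-1)/(2p-n))^p · ∫₀ʳ ρ^p dt. -/
open Real intervalIntegral

theorem riccati_integral_comparison
    (n : ℕ) (hn : 2 ≤ n) (R : ℝ) (hR : 0 ≤ R)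
    (φ ρ : ℝ → ℝ)
    (hφc : ContinuousOn φ (Set.Icc 0 R)) (hρc : ContinuousOn ρ (Set.Icc 0 R))
    (hφ0 : φ 0 = 0) (hφd : Differentiable ℝ φ)
    (hφnn : ∀ t ∈ Set.Icc (0:ℝ) R, 0 ≤ φ t)
    (hρnn : ∀ t ∈ Set.Icc (0:ℝ) R, 0 ≤ ρ t)
    (hriccati : ∀ t ∈ Set.Icc (0:ℝ) R,
      deriv φ t + (φ t) ^ 2 / ((n : ℝ) - 1) ≤ ρ t)
    (p : ℝ) (hp : p > (n : ℝ) / 2) :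
    ∀ r ∈ Set.Icc (0:ℝ) R,
      ∫ t in (0:ℝ)..r, (φ t) ^ (2 * p)
        ≤ (((n : ℝ) - 1) * (2 * p - 1) / (2 * p - n)) ^ p *
            ∫ t in (0:ℝ)..r, (ρ t) ^ p := by
  rintro r ⟨hr0, hrR⟩
  have hn1 : (2:ℝ) ≤ (n:ℝ) := by exact_mod_cast hn
  set c : ℝ := (n:ℝ) - 1 with hcdef
  have hc0 : (0:ℝ) < c := by simp only [hcdef]; linarith
  have hcne : c ≠ 0 := ne_of_gt hc0
  have hp1 : (1:ℝ) < p := by nlinarith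
  have hp0 : (0:ℝ) < p := by linarith
  have hpne : p ≠ 0 := ne_of_gt hp0
  have hpm1 : p - 1 ≠ 0 := sub_ne_zero.mpr (ne_of_gt hp1)
  have hrp1 : (1:ℝ) ≤ 2 * p - 1 := by linarith
  have h2p1 : (0:ℝ) < 2 * p - 1 := by linarith
  have hq2 : (0:ℝ) ≤ 2 * p - 2 := by linarith
  have h2pn : (0:ℝ) < 2 * p - n := by linarith
  have hφcont : Continuous φ := hφd.continuous
  have coRpow : ∀ q : ℝ, 0 ≤ q → Continuous (fun t => (φ t) ^ q) := fun q hq =>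
    continuous_iff_continuousAt.2 fun x =>
      (Real.continuousAt_rpow_const (φ x) q (Or.inr hq)).comp hφcont.continuousAt
  have hψ1 : Continuous (fun t => (φ t) ^ (2 * p)) := coRpow _ (by linarith)
  have hψ2 : ContinuousOn (fun t => (φ t) ^ (2 * p - 2) * ρ t) (Set.Icc 0 R) :=
    (coRpow _ hq2).continuousOn.mul hρc
  have hψ2' : ContinuousOn (fun t => (φ t) ^ (2 * p - 2) * ρ t) (Set.Ioo 0 R) :=
    hψ2.mono Set.Ioo_subset_Icc_self
  have hsubIcc : Set.Icc (0:ℝ) r ⊆ Set.Icc 0 R := Set.Icc_subset_Icc le_rfl hrR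
  -- the key rpow splitting identity
  have hsplit : ∀ a : ℝ, 0 ≤ a → a ^ (2 * p) = a ^ (2 * p - 2) * a ^ 2 := by
    intro a ha
    rcases ha.eq_or_lt with h | h
    · rw [← h, Real.zero_rpow (by positivity), sq, mul_zero, mul_zero]
    · have h2 : a ^ (2:ℕ) = a ^ ((2:ℕ):ℝ) := (Real.rpow_natCast a 2).symm
      rw [h2, ← Real.rpow_add h]
      norm_num
  set I1 : ℝ → ℝ := fun x => ∫ s in (0:ℝ)..x, (φ s) ^ (2 * p) with hI1def
  set I2 : ℝ → ℝ := fun x => ∫ s in (0:ℝ)..x, (φ s) ^ (2 * p - 2) * ρ s with hI2def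
  set G : ℝ → ℝ := fun x =>
    (φ x) ^ (2 * p - 1) + ((2 * p - 1) / c) * I1 x - (2 * p - 1) * I2 x with hGdef
  -- continuity of G on [0, r]
  have hI1c : ContinuousOn I1 (Set.Icc 0 r) := by
    have := intervalIntegral.continuousOn_primitive_interval
      (f := fun s => (φ s) ^ (2 * p)) (a := (0:ℝ)) (b := r) (μ := MeasureTheory.volume)
      (hψ1.continuousOn.integrableOn_Icc.mono_set (by rw [Set.uIcc_of_le hr0]))
    rw [Set.uIcc_of_le hr0] at this
    exact this
  have hI2c : ContinuousOn I2 (Set.Icc 0 r) := by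
    have := intervalIntegral.continuousOn_primitive_interval
      (f := fun s => (φ s) ^ (2 * p - 2) * ρ s) (a := (0:ℝ)) (b := r)
      (μ := MeasureTheory.volume)
      (((hψ2.mono hsubIcc).integrableOn_Icc).mono_set (by rw [Set.uIcc_of_le hr0]))
    rw [Set.uIcc_of_le hr0] at this
    exact this
  have hGc : ContinuousOn G (Set.Icc 0 r) := by
    rw [hGdef]
    exact (((coRpow (2 * p - 1) (by linarith)).continuousOn).add
      (continuousOn_const.mul hI1c)).sub (continuousOn_const.mul hI2c)
  -- derivative of G at interior points
  have hGD : ∀ x ∈ Set.Ioo (0:ℝ) r, HasDerivAt G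
      ((2 * p - 1) * (φ x) ^ (2 * p - 1 - 1) * deriv φ x
        + ((2 * p - 1) / c) * (φ x) ^ (2 * p)
        - (2 * p - 1) * ((φ x) ^ (2 * p - 2) * ρ x)) x := by
    intro x hx
    have hxR : x ∈ Set.Ioo (0:ℝ) R := ⟨hx.1, lt_of_lt_of_le hx.2 hrR⟩
    have hF : HasDerivAt (fun t => (φ t) ^ (2 * p - 1))
        ((2 * p - 1) * (φ x) ^ (2 * p - 1 - 1) * deriv φ x) x :=
      (Real.hasDerivAt_rpow_const (p := 2 * p - 1) (Or.inr hrp1)).comp x (hφd x).hasDerivAt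
    have hI1d : HasDerivAt I1 ((φ x) ^ (2 * p)) x :=
      intervalIntegral.integral_hasDerivAt_right
        (hψ1.continuousOn.intervalIntegrable)
        (hψ1.stronglyMeasurableAtFilter _ _) hψ1.continuousAt
    have hI2d : HasDerivAt I2 ((φ x) ^ (2 * p - 2) * ρ x) x := by
      refine intervalIntegral.integral_hasDerivAt_right ?_
        (hψ2'.stronglyMeasurableAtFilter isOpen_Ioo x hxR) ?_
      · apply ContinuousOn.intervalIntegrable
        apply hψ2.mono
        rw [Set.uIcc_of_le hx.1.le]
        exact Set.Icc_subset_Icc le_rfl hxR.2.le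
      · exact hψ2.continuousAt (Icc_mem_nhds hxR.1 hxR.2)
    exact (hF.add (hI1d.const_mul ((2 * p - 1) / c))).sub (hI2d.const_mul (2 * p - 1))
  -- G is antitone on [0, r]
  have hant : AntitoneOn G (Set.Icc 0 r) := by
    refine antitoneOn_of_deriv_nonpos (convex_Icc 0 r) hGc ?_ ?_
    · intro x hx
      rw [interior_Icc] at hx
      exact ((hGD x hx).differentiableAt).differentiableWithinAt
    · intro x hx
      rw [interior_Icc] at hx
      rw [(hGD x hx).deriv]
      have hxIcc : x ∈ Set.Icc (0:ℝ) R := ⟨hx.1.le, hx.2.le.trans hrR⟩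
      have hφx : 0 ≤ φ x := hφnn x hxIcc
      have key : (2 * p - 1) * (φ x) ^ (2 * p - 1 - 1) * deriv φ x
          + ((2 * p - 1) / c) * (φ x) ^ (2 * p)
          - (2 * p - 1) * ((φ x) ^ (2 * p - 2) * ρ x)
          = ((2 * p - 1) * (φ x) ^ (2 * p - 2)) *
              (deriv φ x + (φ x) ^ 2 / c - ρ x) := by
        rw [hsplit _ hφx, show 2 * p - 1 - 1 = 2 * p - 2 by ring]
        field_simp
      rw [key]
      exact mul_nonpos_of_nonneg_of_nonpos
        (mul_nonneg h2p1.le (Real.rpow_nonneg hφx _))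
        (by have := hriccati x hxIcc; simp only [hcdef]; linarith)
  have hG0 : G 0 = 0 := by
    simp [hGdef, hI1def, hI2def, hφ0, intervalIntegral.integral_same,
      Real.zero_rpow (by positivity : 2 * p - 1 ≠ 0)]
  have hGr : G r ≤ 0 := by
    have := hant (Set.left_mem_Icc.2 hr0) (Set.right_mem_Icc.2 hr0) hr0
    rwa [hG0] at this
  have hφr : 0 ≤ (φ r) ^ (2 * p - 1) := Real.rpow_nonneg (hφnn r ⟨hr0, hrR⟩) _
  -- A ≤ c * C
  have hAC : I1 r ≤ c * I2 r := by
    have h1 : ((2 * p - 1) / c) * I1 r ≤ (2 * p - 1) * I2 r := by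
      simp only [hGdef] at hGr
      linarith
    rw [div_mul_eq_mul_div, div_le_iff₀ hc0] at h1
    nlinarith
  -- Young's inequality, pointwise
  have hconj : (p / (p - 1)).HolderConjugate p := by
    rw [Real.holderConjugate_iff]
    constructor
    · rw [lt_div_iff₀ (by linarith : (0:ℝ) < p - 1)]; linarith
    · rw [inv_div]
      field_simp
      ring
  have hyoung : ∀ t ∈ Set.Icc (0:ℝ) r,
      c * ((φ t) ^ (2 * p - 2) * ρ t)
        ≤ (p - 1) / p * (φ t) ^ (2 * p) + c ^ p / p * (ρ t) ^ p := by
    intro t ht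
    have ht' : t ∈ Set.Icc (0:ℝ) R := hsubIcc ht
    have hφt : 0 ≤ φ t := hφnn t ht'
    have hρt : 0 ≤ ρ t := hρnn t ht'
    have hY := Real.young_inequality_of_nonneg (Real.rpow_nonneg hφt (2 * p - 2))
      (mul_nonneg hc0.le hρt) hconj
    have e1 : ((φ t) ^ (2 * p - 2)) ^ (p / (p - 1)) = (φ t) ^ (2 * p) := by
      rw [← Real.rpow_mul hφt]
      congr 1
      field_simp
    have e2 : (c * ρ t) ^ p = c ^ p * (ρ t) ^ p := Real.mul_rpow hc0.le hρt
    rw [e1, e2] at hY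
    have e3 : (φ t) ^ (2 * p) / (p / (p - 1)) = (p - 1) / p * (φ t) ^ (2 * p) := by
      rw [div_div_eq_mul_div]
      ring
    rw [e3] at hY
    calc c * ((φ t) ^ (2 * p - 2) * ρ t) = (φ t) ^ (2 * p - 2) * (c * ρ t) := by ring
      _ ≤ (p - 1) / p * (φ t) ^ (2 * p) + c ^ p * (ρ t) ^ p / p := hY
      _ = (p - 1) / p * (φ t) ^ (2 * p) + c ^ p / p * (ρ t) ^ p := by ring
  -- integrate Young's inequality
  have hρp : ContinuousOn (fun t => (ρ t) ^ p) (Set.Icc 0 r) := by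
    apply ContinuousOn.rpow_const (hρc.mono hsubIcc)
    intro t ht
    exact Or.inr hp0.le
  have hint2 : IntervalIntegrable (fun t => (φ t) ^ (2 * p - 2) * ρ t)
      MeasureTheory.volume 0 r := by
    apply ContinuousOn.intervalIntegrable
    rw [Set.uIcc_of_le hr0]
    exact hψ2.mono hsubIcc
  have hint1 : IntervalIntegrable (fun t => (φ t) ^ (2 * p)) MeasureTheory.volume 0 r :=
    hψ1.continuousOn.intervalIntegrable
  have hintρ : IntervalIntegrable (fun t => (ρ t) ^ p) MeasureTheory.volume 0 r := by
    apply ContinuousOn.intervalIntegrable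
    rw [Set.uIcc_of_le hr0]
    exact hρp
  have hCB : c * I2 r ≤ (p - 1) / p * I1 r + c ^ p / p * ∫ t in (0:ℝ)..r, (ρ t) ^ p := by
    have hmono := intervalIntegral.integral_mono_on hr0 (hint2.const_mul c)
      (((hint1.const_mul ((p - 1) / p))).add (hintρ.const_mul (c ^ p / p))) hyoung
    rw [intervalIntegral.integral_const_mul,
      intervalIntegral.integral_add (hint1.const_mul _) (hintρ.const_mul _),
      intervalIntegral.integral_const_mul, intervalIntegral.integral_const_mul] at hmono
    exact hmono
  have hBnn : 0 ≤ ∫ t in (0:ℝ)..r, (ρ t) ^ p := by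
    apply intervalIntegral.integral_nonneg hr0
    intro t ht
    exact Real.rpow_nonneg (hρnn t (hsubIcc ht)) p
  have hAcB : I1 r ≤ c ^ p * ∫ t in (0:ℝ)..r, (ρ t) ^ p := by
    have h4 : I1 r ≤ (p - 1) / p * I1 r + c ^ p / p * ∫ t in (0:ℝ)..r, (ρ t) ^ p :=
      le_trans hAC hCB
    have h5 : (p - 1) / p * I1 r + c ^ p / p * (∫ t in (0:ℝ)..r, (ρ t) ^ p)
        = ((p - 1) * I1 r + c ^ p * ∫ t in (0:ℝ)..r, (ρ t) ^ p) / p := by ring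
    rw [h5, le_div_iff₀ hp0] at h4
    nlinarith
  have hfin : c ^ p * (∫ t in (0:ℝ)..r, (ρ t) ^ p)
      ≤ (c * (2 * p - 1) / (2 * p - n)) ^ p * ∫ t in (0:ℝ)..r, (ρ t) ^ p := by
    apply mul_le_mul_of_nonneg_right _ hBnn
    apply Real.rpow_le_rpow hc0.le _ hp0.le
    rw [le_div_iff₀ h2pn]
    nlinarith
  exact le_trans hAcB hfin
end

section
/- Let φ, ρ : [0,R] → ℝ be continuous nonnegative functions with φ(0) = 0 and φ differentiable, satisfying φ' + φ²/(n-1) ≤ ρ on [0,R] for some integer n ≥ 2. Then for every p > n/2 and every r ∈ [0,R], φ(r)^{2p-1} ≤ (2p-1)^p · ((n-1)/(2p-n))^{p-1} · ∫₀ʳ ρ^p dt. -/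
open Real intervalIntegral

theorem riccati_pointwise_comparison
    (n : ℕ) (hn : 2 ≤ n) (R : ℝ) (hR : 0 ≤ R)
    (φ ρ : ℝ → ℝ)
    (hφc : ContinuousOn φ (Set.Icc 0 R)) (hρc : ContinuousOn ρ (Set.Icc 0 R))
    (hφ0 : φ 0 = 0) (hφd : Differentiable ℝ φ)
    (hφnn : ∀ t ∈ Set.Icc (0:ℝ) R, 0 ≤ φ t)
    (hρnn : ∀ t ∈ Set.Icc (0:ℝ) R, 0 ≤ ρ t)
    (hriccati : ∀ t ∈ Set.Icc (0:ℝ) R,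
      deriv φ t + (φ t) ^ 2 / ((n : ℝ) - 1) ≤ ρ t)
    (p : ℝ) (hp : p > (n : ℝ) / 2) :
    ∀ r ∈ Set.Icc (0:ℝ) R,
      (φ r) ^ (2 * p - 1)
        ≤ (2 * p - 1) ^ p * (((n : ℝ) - 1) / (2 * p - n)) ^ (p - 1) *
            ∫ t in (0:ℝ)..r, (ρ t) ^ p := by
  intro r hr
  obtain ⟨hr0, hrR⟩ := hr
  have hn1 : (1:ℝ) ≤ (n:ℝ) - 1 := by
    have : (2:ℝ) ≤ (n:ℝ) := by exact_mod_cast hn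
    linarith
  have hn1pos : (0:ℝ) < (n:ℝ) - 1 := by linarith
  have hp1 : 1 < p := by
    have : (2:ℝ) ≤ (n:ℝ) := by exact_mod_cast hn
    have := hp
    nlinarith
  have hpn : (0:ℝ) < 2 * p - n := by
    have := hp; nlinarith [hp]
  have h2p1 : (1:ℝ) < 2 * p - 1 := by linarith
  have h2p2 : (0:ℝ) < 2 * p - 2 := by linarith
  have hIccr : Set.Icc (0:ℝ) r ⊆ Set.Icc 0 R := Set.Icc_subset_Icc le_rfl hrR
  -- continuity facts
  have hφcr : ContinuousOn φ (Set.Icc 0 r) := hφc.mono hIccr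
  have hρcr : ContinuousOn ρ (Set.Icc 0 r) := hρc.mono hIccr
  have hcont22 : ContinuousOn (fun t => φ t ^ (2*p-2)) (Set.Icc 0 r) :=
    (Real.continuous_rpow_const h2p2.le).comp_continuousOn hφcr
  have hcont2p : ContinuousOn (fun t => φ t ^ (2*p)) (Set.Icc 0 r) :=
    (Real.continuous_rpow_const (by linarith : (0:ℝ) ≤ 2*p)).comp_continuousOn hφcr
  have hcontρp : ContinuousOn (fun t => ρ t ^ p) (Set.Icc 0 r) :=
    (Real.continuous_rpow_const (by linarith : (0:ℝ) ≤ p)).comp_continuousOn hρcr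
  -- the bound function
  set h : ℝ → ℝ := fun t => (2*p-1) * (ρ t * φ t ^ (2*p-2) - φ t ^ (2*p) / ((n:ℝ)-1)) with hh
  have hconth : ContinuousOn h (Set.Icc 0 r) := by
    apply ContinuousOn.mul continuousOn_const
    exact (hρcr.mul hcont22).sub (hcont2p.div_const _)
  have hinth : MeasureTheory.IntegrableOn h (Set.Icc 0 r) := by
    exact hconth.integrableOn_compact isCompact_Icc
  -- Step 1 : derivative comparison
  have step1 : φ r ^ (2*p-1) - φ 0 ^ (2*p-1) ≤ ∫ t in (0:ℝ)..r, h t := by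
    apply intervalIntegral.sub_le_integral_of_hasDeriv_right_of_le hr0
      ((Real.continuous_rpow_const (by linarith : (0:ℝ) ≤ 2*p-1)).comp_continuousOn hφcr)
      (g' := fun t => (2*p-1) * φ t ^ (2*p-1-1) * deriv φ t)
      (fun x hx => ?_) hinth (fun x hx => ?_)
    · have h1 : HasDerivAt (fun y : ℝ => y ^ (2*p-1)) ((2*p-1) * φ x ^ (2*p-1-1)) (φ x) :=
        Real.hasDerivAt_rpow_const (Or.inr h2p1.le)
      exact ((h1.comp x (hφd x).hasDerivAt).hasDerivWithinAt)
    · have hxI : x ∈ Set.Icc (0:ℝ) R := hIccr ⟨hx.1.le, hx.2.le⟩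
      have hφx : 0 ≤ φ x := hφnn x hxI
      have hric := hriccati x hxI
      have hφ22 : (0:ℝ) ≤ φ x ^ (2*p-2) := Real.rpow_nonneg hφx _
      have key : φ x ^ (2*p-2) * φ x ^ 2 = φ x ^ (2*p) := by
        rw [← Real.rpow_natCast (φ x) 2, ← Real.rpow_add' hφx (by norm_num; linarith)]
        norm_num
      have h21 : (2:ℝ)*p-1-1 = 2*p-2 := by ring
      rw [h21]
      have : deriv φ x ≤ ρ x - φ x ^ 2 / ((n:ℝ)-1) := by linarith
      have hmul := mul_le_mul_of_nonneg_left this hφ22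
      calc (2*p-1) * φ x ^ (2*p-2) * deriv φ x
          = (2*p-1) * (φ x ^ (2*p-2) * deriv φ x) := by ring
        _ ≤ (2*p-1) * (φ x ^ (2*p-2) * (ρ x - φ x ^ 2 / ((n:ℝ)-1))) := by
            apply mul_le_mul_of_nonneg_left hmul (by linarith)
        _ = h x := by
            rw [hh]; dsimp only
            rw [mul_sub, ← mul_div_assoc, key, mul_comm (φ x ^ (2*p-2)) (ρ x)]
  rw [hφ0, Real.zero_rpow (by linarith : 2*p-1 ≠ 0), sub_zero] at step1
  -- integrability of pieces
  have hint1 : IntervalIntegrable (fun t => ρ t * φ t ^ (2*p-2)) MeasureTheory.volume 0 r := by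
    apply ContinuousOn.intervalIntegrable
    rw [Set.uIcc_of_le hr0]; exact hρcr.mul hcont22
  have hint2 : IntervalIntegrable (fun t => φ t ^ (2*p)) MeasureTheory.volume 0 r := by
    apply ContinuousOn.intervalIntegrable
    rw [Set.uIcc_of_le hr0]; exact hcont2p
  have hintρp : IntervalIntegrable (fun t => ρ t ^ p) MeasureTheory.volume 0 r := by
    apply ContinuousOn.intervalIntegrable
    rw [Set.uIcc_of_le hr0]; exact hcontρp
  set J : ℝ := ∫ t in (0:ℝ)..r, ρ t * φ t ^ (2*p-2) with hJ
  set I : ℝ := ∫ t in (0:ℝ)..r, φ t ^ (2*p) with hI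
  set A : ℝ := ∫ t in (0:ℝ)..r, ρ t ^ p with hA
  have hsplit : (∫ t in (0:ℝ)..r, h t) = (2*p-1) * (J - I / ((n:ℝ)-1)) := by
    rw [hh]
    rw [intervalIntegral.integral_const_mul]
    congr 1
    rw [intervalIntegral.integral_sub hint1 (hint2.div_const _)]
    congr 1
    exact intervalIntegral.integral_div _ _
  rw [hsplit] at step1
  -- nonnegativity
  have hφr2p1 : 0 ≤ φ r ^ (2*p-1) := Real.rpow_nonneg (hφnn r ⟨hr0, hrR⟩) _
  have hInn : 0 ≤ I := by
    apply intervalIntegral.integral_nonneg hr0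
    intro u hu; exact Real.rpow_nonneg (hφnn u (hIccr hu)) _
  have hAnn : 0 ≤ A := by
    apply intervalIntegral.integral_nonneg hr0
    intro u hu; exact Real.rpow_nonneg (hρnn u (hIccr hu)) _
  -- Hölder
  set q : ℝ := p / (p - 1) with hq
  have hpq : p.HolderConjugate q := Real.HolderConjugate.conjExponent hp1
  have holder : J ≤ A ^ (1/p) * I ^ (1/q) := by
    have hrIoc : Set.Ioc (0:ℝ) r ⊆ Set.Icc 0 R := fun x hx => hIccr ⟨hx.1.le, hx.2⟩
    set μ := MeasureTheory.volume.restrict (Set.Ioc (0:ℝ) r) with hμ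
    have hfin : MeasureTheory.IsFiniteMeasure μ := by
      constructor
      rw [hμ, MeasureTheory.Measure.restrict_apply_univ]
      exact measure_Ioc_lt_top
    have haemeas : ∀ (f : ℝ → ℝ), ContinuousOn f (Set.Icc 0 r) →
        MeasureTheory.AEStronglyMeasurable f μ := by
      intro f hf
      rw [hμ, ← MeasureTheory.Measure.restrict_restrict_of_subset Set.Ioc_subset_Icc_self]
      exact (hf.aestronglyMeasurable measurableSet_Icc).restrict
    have hmemlp : ∀ (f : ℝ → ℝ) (e : ℝ), ContinuousOn f (Set.Icc 0 r) →
        MeasureTheory.MemLp f (ENNReal.ofReal e) μ := by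
      intro f e hf
      obtain ⟨C, hC⟩ := isCompact_Icc.exists_bound_of_continuousOn hf
      apply MeasureTheory.MemLp.of_bound (haemeas f hf) C
      rw [hμ]
      filter_upwards [MeasureTheory.ae_restrict_mem measurableSet_Ioc] with x hx
      exact hC x ⟨hx.1.le, hx.2⟩
    have hρae : 0 ≤ᵐ[μ] ρ := by
      rw [hμ]
      filter_upwards [MeasureTheory.ae_restrict_mem measurableSet_Ioc] with x hx
      exact hρnn x (hrIoc hx)
    have hφ22ae : 0 ≤ᵐ[μ] (fun t => φ t ^ (2*p-2)) := by
      rw [hμ]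
      filter_upwards [MeasureTheory.ae_restrict_mem measurableSet_Ioc] with x hx
      exact Real.rpow_nonneg (hφnn x (hrIoc hx)) _
    have hH := MeasureTheory.integral_mul_le_Lp_mul_Lq_of_nonneg hpq hρae hφ22ae
      (hmemlp ρ p hρcr) (hmemlp _ q hcont22)
    have hqI : (∫ a, ((fun t => φ t ^ (2*p-2)) a) ^ q ∂μ) = I := by
      rw [hI, intervalIntegral.integral_of_le hr0]
      apply MeasureTheory.integral_congr_ae
      rw [hμ]
      filter_upwards [MeasureTheory.ae_restrict_mem measurableSet_Ioc] with x hx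
      have hφx : 0 ≤ φ x := hφnn x (hrIoc hx)
      have hexp : (2*p-2) * q = 2*p := by
        have hne : p - 1 ≠ 0 := by linarith
        rw [hq]; field_simp
      rw [← Real.rpow_mul hφx, hexp]
    rw [hqI] at hH
    have hJμ : J = ∫ a, ρ a * φ a ^ (2*p-2) ∂μ := by
      rw [hJ, intervalIntegral.integral_of_le hr0, hμ]
    have hAμ : A = ∫ a, ρ a ^ p ∂μ := by
      rw [hA, intervalIntegral.integral_of_le hr0, hμ]
    rw [hJμ, hAμ]
    exact hH
  -- Step 3 : I ≤ (n-1)^p * A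
  have hJle : I ≤ ((n:ℝ)-1) * J := by
    have h1 : (2*p-1) * (I / ((n:ℝ)-1)) ≤ (2*p-1) * J := by linarith
    have h2 : I / ((n:ℝ)-1) ≤ J := le_of_mul_le_mul_left h1 (by linarith)
    calc I = ((n:ℝ)-1) * (I / ((n:ℝ)-1)) := by field_simp
      _ ≤ ((n:ℝ)-1) * J := mul_le_mul_of_nonneg_left h2 (by linarith)
  have hq1 : 1/p + 1/q = 1 := by
    simp only [one_div]; exact hpq.inv_add_inv_eq_one
  have hqpos : 0 < q := hpq.symm.pos
  have hstep3 : I ≤ ((n:ℝ)-1) ^ p * A := by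
    rcases eq_or_lt_of_le hInn with hI0 | hI0
    · rw [← hI0]; positivity
    · have hIsplit : I = I ^ (1/p) * I ^ (1/q) := by
        rw [← Real.rpow_add hI0, hq1, Real.rpow_one]
      have hchain : I ^ (1/p) * I ^ (1/q) ≤ (((n:ℝ)-1) * A ^ (1/p)) * I ^ (1/q) := by
        rw [← hIsplit]
        calc I ≤ ((n:ℝ)-1) * J := hJle
          _ ≤ ((n:ℝ)-1) * (A ^ (1/p) * I ^ (1/q)) :=
              mul_le_mul_of_nonneg_left holder (by linarith)
          _ = (((n:ℝ)-1) * A ^ (1/p)) * I ^ (1/q) := by ring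
      have hIq : 0 < I ^ (1/q) := Real.rpow_pos_of_pos hI0 _
      have h3 : I ^ (1/p) ≤ ((n:ℝ)-1) * A ^ (1/p) := le_of_mul_le_mul_right hchain hIq
      have h4 : (I ^ (1/p)) ^ p ≤ (((n:ℝ)-1) * A ^ (1/p)) ^ p :=
        Real.rpow_le_rpow (Real.rpow_nonneg hI0.le _) h3 (by linarith)
      have h5 : (I ^ (1/p)) ^ p = I := by
        rw [← Real.rpow_mul hI0.le, one_div_mul_cancel (by linarith : p ≠ 0), Real.rpow_one]
      have h6 : (((n:ℝ)-1) * A ^ (1/p)) ^ p = ((n:ℝ)-1) ^ p * A := by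
        rw [Real.mul_rpow (by linarith) (Real.rpow_nonneg hAnn _),
          ← Real.rpow_mul hAnn, one_div_mul_cancel (by linarith : p ≠ 0), Real.rpow_one]
      rw [h5, h6] at h4
      exact h4
  -- Final chain
  have hfinal : φ r ^ (2*p-1) ≤ (2*p-1) * ((n:ℝ)-1) ^ (p-1) * A := by
    have hIbd : I / ((n:ℝ)-1) ≥ 0 := by positivity
    have h1 : φ r ^ (2*p-1) ≤ (2*p-1) * J := by nlinarith
    have h2 : I ^ (1/q) ≤ (((n:ℝ)-1) ^ p * A) ^ (1/q) :=
      Real.rpow_le_rpow hInn hstep3 (by positivity)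
    have h3 : (((n:ℝ)-1) ^ p * A) ^ (1/q) = ((n:ℝ)-1) ^ (p-1) * A ^ (1/q) := by
      rw [Real.mul_rpow (Real.rpow_nonneg (by linarith) _) hAnn,
        ← Real.rpow_mul (by linarith : (0:ℝ) ≤ (n:ℝ)-1)]
      congr 2
      rw [hq]; field_simp
    have h4 : A ^ (1/p) * A ^ (1/q) = A := by
      rw [← Real.rpow_add' hAnn (by rw [hq1]; norm_num), hq1, Real.rpow_one]
    calc φ r ^ (2*p-1) ≤ (2*p-1) * J := h1
      _ ≤ (2*p-1) * (A ^ (1/p) * I ^ (1/q)) := mul_le_mul_of_nonneg_left holder (by linarith)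
      _ ≤ (2*p-1) * (A ^ (1/p) * (((n:ℝ)-1) ^ (p-1) * A ^ (1/q))) := by
          rw [h3] at h2
          apply mul_le_mul_of_nonneg_left _ (by linarith : (0:ℝ) ≤ 2*p-1)
          exact mul_le_mul_of_nonneg_left h2 (Real.rpow_nonneg hAnn _)
      _ = (2*p-1) * ((n:ℝ)-1) ^ (p-1) * (A ^ (1/p) * A ^ (1/q)) := by ring
      _ = (2*p-1) * ((n:ℝ)-1) ^ (p-1) * A := by rw [h4]
  -- compare constants
  have hconst : (2*p-1) * ((n:ℝ)-1) ^ (p-1)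
      ≤ (2*p-1) ^ p * (((n:ℝ)-1) / (2*p-n)) ^ (p-1) := by
    have e1 : (2*p-1:ℝ) ^ p = (2*p-1) * (2*p-1) ^ (p-1) := by
      nth_rewrite 2 [← Real.rpow_one (2*p-1)]
      rw [← Real.rpow_add (by linarith : (0:ℝ) < 2*p-1)]
      ring_nf
    have e2 : (((n:ℝ)-1) / (2*p-n)) ^ (p-1) = ((n:ℝ)-1) ^ (p-1) / (2*p-n) ^ (p-1) :=
      Real.div_rpow (by linarith) hpn.le _
    rw [e1, e2]
    have h7 : (2*p-(n:ℝ)) ^ (p-1) ≤ (2*p-1) ^ (p-1) := by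
      apply Real.rpow_le_rpow hpn.le _ (by linarith)
      have : (1:ℝ) ≤ (n:ℝ) := by exact_mod_cast Nat.one_le_of_lt hn
      linarith
    have h8 : (0:ℝ) < (2*p-(n:ℝ)) ^ (p-1) := Real.rpow_pos_of_pos hpn _
    rw [div_eq_mul_inv]
    have h9 : (0:ℝ) < ((2*p-(n:ℝ)) ^ (p-1))⁻¹ := by positivity
    have h10 : (2*p-(n:ℝ)) ^ (p-1) * ((2*p-(n:ℝ)) ^ (p-1))⁻¹ = 1 :=
      mul_inv_cancel₀ (ne_of_gt h8)
    have hB : (0:ℝ) ≤ ((n:ℝ)-1) ^ (p-1) := Real.rpow_nonneg (by linarith) _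
    have h11 := mul_le_mul_of_nonneg_right h7 h9.le
    rw [h10] at h11
    calc (2*p-1) * ((n:ℝ)-1) ^ (p-1)
        = (2*p-1) * (((n:ℝ)-1) ^ (p-1) * 1) := by ring
      _ ≤ (2*p-1) * (((n:ℝ)-1) ^ (p-1) * ((2*p-1) ^ (p-1) * ((2*p-(n:ℝ)) ^ (p-1))⁻¹)) :=
          mul_le_mul_of_nonneg_left (mul_le_mul_of_nonneg_left h11 hB) (by linarith)
      _ = (2*p-1) * (2*p-1) ^ (p-1) * (((n:ℝ)-1) ^ (p-1) * ((2*p-(n:ℝ)) ^ (p-1))⁻¹) := by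
          ring
  calc φ r ^ (2*p-1) ≤ (2*p-1) * ((n:ℝ)-1) ^ (p-1) * A := hfinal
    _ ≤ (2*p-1) ^ p * (((n:ℝ)-1) / (2*p-(n:ℝ))) ^ (p-1) * A :=
        mul_le_mul_of_nonneg_right hconst hAnn
end

section
/- Let m > 0, n ≥ 2, and suppose u is smooth with |∇u| = 1 along a geodesic, so that the weighted Bochner inequality gives m_f' ≤ −m_f²/(n+m−1) − Ric_f^m(∂r, ∂r), where m_f = Δ_f r. If Ric_f^m ≥ (n+m−1)H and m_H^{n+m} denotes the mean curvature of geodesic spheres in the (n+m)-dimensional space form of curvature H, satisfying (m_H^{n+m})' = −(m_H^{n+m})²/(n+m−1) − (n+m−1)H, then φ := (m_f − m_H^{n+m})₊ ≡ 0 along any minimal geodesic; more generally if φ' + φ²/(n+m−1) + 2 m_H^{n+m} φ/(n+m−1) ≤ ρ with ρ = ((n+m−1)H − λ)₊ ≥ 0, φ(0)=0, and p > (n+m)/2, then ∫₀ʳ φ^{2p} dt ≤ ((n+m−1)(2p−1)/(2p−n−m))^p ∫₀ʳ ρ^p dt when H ≥ 0 and r is in the range where m_H^{n+m} ≥ 0.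 -/
open Real intervalIntegral

theorem young_aux {c p x y : ℝ} (hc : 0 < c) (hp1 : 1 < p) (hx : 0 ≤ x) (hy : 0 ≤ y) :
    x * y ^ (2*p-2) ≤ c ^ (p-1) / p * x ^ p + (p-1)/(c*p) * y ^ (2*p) := by
  have hp0 : (0:ℝ) < p := by linarith
  have h1 : p - 1 ≠ 0 := sub_ne_zero.mpr (ne_of_gt hp1)
  have h2 : p ≠ 0 := ne_of_gt hp0
  have hpq : p.HolderConjugate (p/(p-1)) := Real.holderConjugate_iff.mpr ⟨hp1, by field_simp; ring⟩
  have key := Real.young_inequality_of_nonneg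
    (mul_nonneg hx (Real.rpow_nonneg hc.le _))
    (mul_nonneg (Real.rpow_nonneg hc.le _) (Real.rpow_nonneg hy _)) hpq
    (a := x * c ^ ((p-1)/p)) (b := c ^ (-((p-1)/p)) * y ^ (2*p-2))
  have e1 : x * c ^ ((p-1)/p) * (c ^ (-((p-1)/p)) * y ^ (2*p-2)) = x * y ^ (2*p-2) := by
    rw [mul_assoc x, ← mul_assoc (c ^ ((p-1)/p)), ← Real.rpow_add hc]
    norm_num
  have e2 : (x * c ^ ((p-1)/p)) ^ p = x ^ p * c ^ (p-1) := by
    rw [Real.mul_rpow hx (Real.rpow_nonneg hc.le _), ← Real.rpow_mul hc.le]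
    congr 2
    field_simp
  have hexp1 : -((p-1)/p) * (p/(p-1)) = -1 := by field_simp
  have hexp2 : (2*p-2) * (p/(p-1)) = 2*p := by field_simp
  have e3 : (c ^ (-((p-1)/p)) * y ^ (2*p-2)) ^ (p/(p-1)) = c⁻¹ * y ^ (2*p) := by
    rw [Real.mul_rpow (Real.rpow_nonneg hc.le _) (Real.rpow_nonneg hy _),
      ← Real.rpow_mul hc.le, ← Real.rpow_mul hy, hexp1, hexp2, Real.rpow_neg_one]
  rw [e1, e2, e3] at key
  calc x * y ^ (2*p-2) ≤ x ^ p * c ^ (p-1) / p + c⁻¹ * y ^ (2*p) / (p/(p-1)) := key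
    _ = c ^ (p-1) / p * x ^ p + (p-1)/(c*p) * y ^ (2*p) := by
        field_simp

theorem m_bakry_emery_riccati_comparison
    (m : ℝ) (hm : 0 < m) (n : ℕ) (hn : 2 ≤ n)
    (H r : ℝ) (hH : 0 ≤ H) (hr : 0 ≤ r)
    (φ ρ mHnm : ℝ → ℝ)
    (hφc : ContinuousOn φ (Set.Icc 0 r)) (hρc : ContinuousOn ρ (Set.Icc 0 r))
    (hφd : Differentiable ℝ φ) (hφ0 : φ 0 = 0)
    (hφnn : ∀ t ∈ Set.Icc (0:ℝ) r, 0 ≤ φ t)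
    (hρnn : ∀ t ∈ Set.Icc (0:ℝ) r, 0 ≤ ρ t)
    (hmH' : ∀ t ∈ Set.Ioc (0:ℝ) r,
      deriv mHnm t = -(mHnm t) ^ 2 / ((n : ℝ) + m - 1) - ((n : ℝ) + m - 1) * H)
    (hmHnn : ∀ t ∈ Set.Ioc (0:ℝ) r, 0 ≤ mHnm t)
    (hriccati : ∀ t ∈ Set.Ioc (0:ℝ) r,
      deriv φ t + (φ t) ^ 2 / ((n : ℝ) + m - 1)
        + 2 * mHnm t * φ t / ((n : ℝ) + m - 1) ≤ ρ t)
    (p : ℝ) (hp : p > ((n : ℝ) + m) / 2) :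
    (∫ t in (0:ℝ)..r, (φ t) ^ (2 * p)
        ≤ (((n : ℝ) + m - 1) * (2 * p - 1) / (2 * p - n - m)) ^ p *
            ∫ t in (0:ℝ)..r, (ρ t) ^ p) ∧
    ((∀ t ∈ Set.Icc (0:ℝ) r, ρ t = 0) → ∀ t ∈ Set.Icc (0:ℝ) r, φ t = 0) := by
  set c : ℝ := (n : ℝ) + m - 1 with hcdef
  have hn2 : (2:ℝ) ≤ (n:ℝ) := by exact_mod_cast hn
  have hc : 0 < c := by rw [hcdef]; linarith
  have hp1 : 1 < p := by rw [hcdef] at *; linarith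
  have hp0 : (0:ℝ) < p := by linarith
  have h2pN : (n:ℝ) + m < 2 * p := by linarith [hp]
  have he : (0:ℝ) < 2*p - 1 := by linarith
  have he1 : (1:ℝ) ≤ 2*p - 1 := by linarith
  have he2 : (0:ℝ) < 2*p - 2 := by linarith
  have hφC : Continuous φ := hφd.continuous
  have contpow : ∀ a : ℝ, 0 < a → Continuous fun x : ℝ => x ^ a := fun a ha =>
    continuous_iff_continuousAt.mpr fun x => Real.continuousAt_rpow_const x a (Or.inr ha.le)
  have c2p : Continuous fun t => φ t ^ (2*p) := (contpow _ (by linarith)).comp hφC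
  have c2p2 : Continuous fun t => φ t ^ (2*p-2) := (contpow _ he2).comp hφC
  have ce1 : Continuous fun t => φ t ^ (2*p-1) := (contpow _ he).comp hφC
  have huIcc : Set.uIcc (0:ℝ) r = Set.Icc 0 r := Set.uIcc_of_le hr
  set h : ℝ → ℝ := fun s => (2*p-1) * (ρ s * φ s ^ (2*p-2) - φ s ^ (2*p) / c) with hhdef
  have hhc : ContinuousOn h (Set.Icc 0 r) :=
    continuousOn_const.mul ((hρc.mul c2p2.continuousOn).sub (c2p.continuousOn.div_const c))
  set G : ℝ → ℝ := fun t => ∫ s in (0:ℝ)..t, h s with hGdef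
  set F : ℝ → ℝ := fun t => φ t ^ (2*p-1) - G t with hFdef
  -- derivative of F on the interior
  have key : ∀ t ∈ Set.Ioo (0:ℝ) r,
      HasDerivAt F ((2*p-1) * φ t ^ (2*p-1-1) * deriv φ t - h t) t := by
    intro t ht
    have hd1 : HasDerivAt (fun u => φ u ^ (2*p-1))
        ((2*p-1) * φ t ^ (2*p-1-1) * deriv φ t) t :=
      (Real.hasDerivAt_rpow_const (x := φ t) (p := 2*p-1) (Or.inr he1)).comp t (hφd t).hasDerivAt
    have hd2 : HasDerivAt G (h t) t := by
      apply intervalIntegral.integral_hasDerivAt_right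
      · apply (hhc.mono _).intervalIntegrable
        rw [Set.uIcc_of_le ht.1.le]
        exact Set.Icc_subset_Icc le_rfl ht.2.le
      · exact (hhc.mono Set.Ioo_subset_Icc_self).stronglyMeasurableAtFilter isOpen_Ioo t ht
      · exact hhc.continuousAt (Icc_mem_nhds ht.1 ht.2)
    exact hd1.sub hd2
  have hGc : ContinuousOn G (Set.Icc 0 r) := by
    rw [← huIcc]
    apply intervalIntegral.continuousOn_primitive_interval
    rw [huIcc]
    exact hhc.integrableOn_Icc
  have hFanti : AntitoneOn F (Set.Icc 0 r) := by
    apply antitoneOn_of_deriv_nonpos (convex_Icc 0 r) (ce1.continuousOn.sub hGc)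
    · intro t ht
      rw [interior_Icc] at ht
      exact ((key t ht).differentiableAt).differentiableWithinAt
    · intro t ht
      rw [interior_Icc] at ht
      rw [show ((fun t => φ t ^ (2 * p - 1)) - G) = F from rfl, (key t ht).deriv]
      have htIoc : t ∈ Set.Ioc 0 r := ⟨ht.1, ht.2.le⟩
      have htIcc : t ∈ Set.Icc 0 r := ⟨ht.1.le, ht.2.le⟩
      have hxt : 0 ≤ φ t := hφnn t htIcc
      have hric := hriccati t htIoc
      have hmHt := hmHnn t htIoc
      have hsq : φ t ^ (2*p) = φ t ^ (2*p-2) * φ t ^ 2 := by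
        have hadd := Real.rpow_add' hxt (x := φ t) (y := 2*p-2) (z := 2)
          (ne_of_gt (by linarith : (0:ℝ) < 2*p-2+2))
        rw [Real.rpow_two] at hadd
        rw [← hadd]
        congr 1
        ring
      have h2mH : 0 ≤ 2 * mHnm t * φ t / c :=
        div_nonneg (mul_nonneg (mul_nonneg (by norm_num) hmHt) hxt) hc.le
      have hb : deriv φ t + (φ t) ^ 2 / c - ρ t ≤ 0 := by linarith
      have hX : 0 ≤ φ t ^ (2*p-2) := Real.rpow_nonneg hxt _
      have hXb : φ t ^ (2*p-2) * (deriv φ t + (φ t) ^ 2 / c - ρ t) ≤ 0 :=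
        mul_nonpos_of_nonneg_of_nonpos hX hb
      have hmul := mul_nonpos_of_nonneg_of_nonpos he.le hXb
      rw [hhdef]
      simp only []
      rw [show (2*p-1-1 : ℝ) = 2*p-2 by ring, hsq]
      have heq : (2*p-1) * φ t ^ (2*p-2) * deriv φ t -
          (2*p-1) * (ρ t * φ t ^ (2*p-2) - φ t ^ (2*p-2) * φ t ^ 2 / c) =
          (2*p-1) * (φ t ^ (2*p-2) * (deriv φ t + φ t ^ 2 / c - ρ t)) := by ring
      rw [heq]
      exact hmul
  -- F r ≤ F 0 = 0
  have hF0 : F 0 = 0 := by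
    rw [hFdef]
    simp only [hGdef]
    rw [hφ0, intervalIntegral.integral_same, Real.zero_rpow he.ne']
    ring
  have hFr : F r ≤ 0 := by
    rw [← hF0]
    exact hFanti ⟨le_rfl, hr⟩ ⟨hr, le_rfl⟩ hr
  have hφr : 0 ≤ φ r ^ (2*p-1) := Real.rpow_nonneg (hφnn r ⟨hr, le_rfl⟩) _
  have hGr : 0 ≤ G r := by
    rw [hFdef] at hFr
    simp only [] at hFr
    linarith
  -- integrability
  have hint2p : IntervalIntegrable (fun t => φ t ^ (2*p)) MeasureTheory.volume 0 r :=
    c2p.intervalIntegrable 0 r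
  have hintI : IntervalIntegrable (fun t => ρ t * φ t ^ (2*p-2)) MeasureTheory.volume 0 r := by
    apply ContinuousOn.intervalIntegrable
    rw [huIcc]
    exact hρc.mul c2p2.continuousOn
  have hintB : IntervalIntegrable (fun t => ρ t ^ p) MeasureTheory.volume 0 r := by
    apply ContinuousOn.intervalIntegrable
    rw [huIcc]
    exact (contpow p hp0).comp_continuousOn hρc
  set A : ℝ := ∫ t in (0:ℝ)..r, φ t ^ (2*p) with hAdef
  set B : ℝ := ∫ t in (0:ℝ)..r, ρ t ^ p with hBdef
  set I : ℝ := ∫ t in (0:ℝ)..r, ρ t * φ t ^ (2*p-2) with hIdef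
  have hGrI : G r = (2*p-1) * (I - A / c) := by
    rw [hGdef]
    simp only [hhdef]
    rw [intervalIntegral.integral_const_mul,
      intervalIntegral.integral_sub hintI (hint2p.div_const c),
      intervalIntegral.integral_div]
  have hAcI : A ≤ c * I := by
    rw [hGrI] at hGr
    have h0 : 0 ≤ I - A / c := (mul_nonneg_iff_of_pos_left he).mp hGr
    have h1 : A / c ≤ I := by linarith
    have h2 := (div_le_iff₀ hc).mp h1
    linarith
  -- Young's inequality integrated
  have hIbound : I ≤ c^(p-1)/p * B + (p-1)/(c*p) * A := by
    have step : I ≤ ∫ t in (0:ℝ)..r, (c^(p-1)/p * ρ t ^ p + (p-1)/(c*p) * φ t ^ (2*p)) := by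
      apply intervalIntegral.integral_mono_on hr hintI
        ((hintB.const_mul _).add (hint2p.const_mul _))
      intro t ht
      exact young_aux hc hp1 (hρnn t ht) (hφnn t ht)
    calc I ≤ _ := step
      _ = c^(p-1)/p * B + (p-1)/(c*p) * A := by
        rw [intervalIntegral.integral_add (hintB.const_mul _) (hint2p.const_mul _),
          intervalIntegral.integral_const_mul, intervalIntegral.integral_const_mul]
  have hcc : c * c^(p-1) = c^p := by
    nth_rewrite 1 [← Real.rpow_one c]
    rw [← Real.rpow_add hc]
    norm_num
  have hAB : A ≤ c^p * B := by
    have h10 : A ≤ c^p/p * B + (p-1)/p * A := by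
      have e : c * (c^(p-1)/p * B + (p-1)/(c*p) * A) = (c * c^(p-1))/p * B + (p-1)/p * A := by
        field_simp
      calc A ≤ c * I := hAcI
        _ ≤ c * (c^(p-1)/p * B + (p-1)/(c*p) * A) := mul_le_mul_of_nonneg_left hIbound hc.le
        _ = c^p/p * B + (p-1)/p * A := by rw [e, hcc]
    have h11 := mul_le_mul_of_nonneg_left h10 hp0.le
    have h12 : p * (c^p/p * B + (p-1)/p * A) = c^p * B + (p-1) * A := by
      field_simp
    rw [h12] at h11
    linarith
  have hBnn : 0 ≤ B :=
    intervalIntegral.integral_nonneg hr fun u hu => Real.rpow_nonneg (hρnn u hu) p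
  have hD : (0:ℝ) < 2*p - n - m := by linarith
  have hKc : c ≤ c * (2*p-1) / (2*p - n - m) := by
    rw [le_div_iff₀ hD]
    nlinarith [hc, hn2, hm]
  have hKp : c^p ≤ (c * (2*p-1) / (2*p - n - m))^p := Real.rpow_le_rpow hc.le hKc hp0.le
  constructor
  · calc A ≤ c^p * B := hAB
      _ ≤ (c * (2*p-1) / (2*p - n - m))^p * B := mul_le_mul_of_nonneg_right hKp hBnn
  · intro hρ0 t ht
    have hanti2 : AntitoneOn φ (Set.Icc 0 r) := by
      apply antitoneOn_of_deriv_nonpos (convex_Icc 0 r) hφC.continuousOn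
        hφd.differentiableOn
      intro x hx
      rw [interior_Icc] at hx
      have hIoc : x ∈ Set.Ioc 0 r := ⟨hx.1, hx.2.le⟩
      have hIcc : x ∈ Set.Icc 0 r := ⟨hx.1.le, hx.2.le⟩
      have hric := hriccati x hIoc
      rw [hρ0 x hIcc] at hric
      have h1 : 0 ≤ (φ x)^2 / c := by positivity
      have h2 : 0 ≤ 2 * mHnm x * φ x / c :=
        div_nonneg (mul_nonneg (mul_nonneg (by norm_num) (hmHnn x hIoc)) (hφnn x hIcc)) hc.le
      linarith
    have hle : φ t ≤ 0 := by
      rw [← hφ0]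
      exact hanti2 ⟨le_rfl, hr⟩ ht ht.1
    exact le_antisymm hle (hφnn t ht)
end
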